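/- For every integer k ≥ 2 and every real θ > 0, the equation z = ((θ + z)/(2θz))^k has exactly one solution z in the positive reals. -/

import Mathlib

/-- For every integer `k ≥ 2` and every real `θ > 0`, the equation
`z = ((θ + z)/(2θz))^k` has exactly one solution `z` in the positive reals. -/
theorem hc_blume_capel_unique_positive_solution
    (k : ℕ) (hk : 2 ≤ k) (θ : ℝ) (hθ : 0 < θ) :
    ∃! z : ℝ, 0 < z ∧ z = ((θ + z) / (2 * θ * z)) ^ k := by
  have hk0 : k ≠ 0 := by omega
  set g : ℝ → ℝ := fun z => ((θ + z) / (2 * θ * z)) ^ k with hg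
  have hanti : ∀ a b : ℝ, 0 < a → a < b → g b < g a := by
    intro a b ha hab
    have hb : 0 < b := ha.trans hab
    have h1 : (θ + b) / (2 * θ * b) < (θ + a) / (2 * θ * a) := by
      rw [div_lt_div_iff₀ (by positivity) (by positivity)]
      nlinarith [mul_pos (mul_pos hθ hθ) (sub_pos.mpr hab)]
    exact pow_lt_pow_left₀ h1 (by positivity) hk0
  have huniq : ∀ y z : ℝ, (0 < y ∧ y = g y) → (0 < z ∧ z = g z) → y = z := by
    intro y z hy hz
    rcases lt_trichotomy y z with h | h | h
    · have := hanti y z hy.1 h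
      rw [← hy.2, ← hz.2] at this; linarith
    · exact h
    · have := hanti z y hz.1 h
      rw [← hy.2, ← hz.2] at this; linarith
  -- existence via IVT on [1/2, b]
  set M : ℝ := 1 / 2 + 1 / (2 * θ) with hM
  have hMpos : 0 < M := by positivity
  set b : ℝ := max 1 (M ^ k) with hb
  have hb1 : (1 : ℝ) ≤ b := le_max_left _ _
  have hbpos : 0 < b := lt_of_lt_of_le one_pos hb1
  have hab : (1 : ℝ) / 2 ≤ b := by linarith
  set f : ℝ → ℝ := fun z => z - g z with hf
  have hcont : ContinuousOn f (Set.Icc (1 / 2) b) := by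
    apply ContinuousOn.sub continuousOn_id
    apply ContinuousOn.pow
    apply ContinuousOn.div (by fun_prop) (by fun_prop)
    intro x hx
    have hx1 : (1 : ℝ) / 2 ≤ x := hx.1
    positivity
  have hfa : f (1 / 2) ≤ 0 := by
    have h1 : (1 : ℝ) ≤ (θ + 1 / 2) / (2 * θ * (1 / 2)) := by
      rw [le_div_iff₀ (by positivity)]
      linarith
    have h2 : (1 : ℝ) ≤ g (1 / 2) := by
      calc (1 : ℝ) = 1 ^ k := (one_pow k).symm
      _ ≤ ((θ + 1 / 2) / (2 * θ * (1 / 2))) ^ k := pow_le_pow_left₀ zero_le_one h1 k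
    simp only [hf]
    linarith
  have hfb : 0 ≤ f b := by
    have h1 : (θ + b) / (2 * θ * b) ≤ M := by
      rw [div_le_iff₀ (by positivity)]
      have he : M * (2 * θ * b) = θ * b + b := by rw [hM]; field_simp
      nlinarith
    have h2 : g b ≤ M ^ k := pow_le_pow_left₀ (by positivity) h1 k
    have h3 : M ^ k ≤ b := le_max_right _ _
    simp only [hf]
    linarith
  have hmem : (0 : ℝ) ∈ Set.Icc (f (1 / 2)) (f b) := ⟨hfa, hfb⟩
  obtain ⟨z, hz, hz0⟩ := intermediate_value_Icc hab hcont hmem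
  have hzpos : 0 < z := lt_of_lt_of_le (by norm_num) hz.1
  have hzeq : z = g z := by
    have : z - g z = 0 := hz0
    linarith
  exact ⟨z, ⟨hzpos, hzeq⟩, fun y hy => huniq y z hy ⟨hzpos, hzeq⟩⟩
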